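/- Let S_n be the star tree on n ≥ 3 vertices. Then the rank of Max4PC_{S_n} (over the rationals) equals 2. -/

import Mathlib

open SimpleGraph

variable {V : Type*}

/-- The maximum of the three four-point sums for vertices `w, x, y, z`:
`max (d w x + d y z) (max (d w y + d x z) (d w z + d x y))`.
This is the entry of the matrix `Max4PC` in row `{w,x}` and column `{y,z}`. -/
noncomputable def max4 (G : SimpleGraph V) (w x y z : V) : ℕ :=
  max (G.dist w x + G.dist y z) (max (G.dist w y + G.dist x z) (G.dist w z + G.dist x y))

/-- The `Max4PC` entry as a symmetric function of two unordered pairs. -/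
noncomputable def max4Sym2 (G : SimpleGraph V) : Sym2 V → Sym2 V → ℕ :=
  Sym2.lift₂ ⟨fun w x y z => max4 G w x y z, by
    intro a₁ a₂ b₁ b₂
    simp only [max4]
    constructor
    · rw [show G.dist a₂ a₁ = G.dist a₁ a₂ from G.dist_comm]
      omega
    · rw [show G.dist b₂ b₁ = G.dist b₁ b₂ from G.dist_comm]
      omega⟩

/-- The matrix `Max4PC_T`, with rows and columns indexed by the 2-element
subsets of the vertex set (non-diagonal elements of `Sym2 V`), over `ℚ`. -/
noncomputable def max4Matrix [Fintype V] [DecidableEq V] (G : SimpleGraph V) :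
    Matrix {s : Sym2 V // ¬ s.IsDiag} {s : Sym2 V // ¬ s.IsDiag} ℚ :=
  fun p q => (max4Sym2 G p.1 q.1 : ℚ)

/-- Distances in the star graph. -/
lemma star_dist [DecidableEq V] (G : SimpleGraph V) (c : V)
    (hstar : ∀ x y : V, G.Adj x y ↔ x ≠ y ∧ (x = c ∨ y = c)) (x y : V) :
    G.dist x y = if x = y then 0 else if x = c ∨ y = c then 1 else 2 := by
  split_ifs with h0 h1
  · subst h0; exact G.dist_self
  · exact dist_eq_one_iff_adj.mpr ((hstar x y).mpr ⟨h0, h1⟩)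
  · push_neg at h1
    obtain ⟨hx, hy⟩ := h1
    have hxc : G.Adj x c := (hstar x c).mpr ⟨hx, Or.inr rfl⟩
    have hcy : G.Adj c y := (hstar c y).mpr ⟨fun hc => hy hc.symm, Or.inl rfl⟩
    have hle : G.dist x y ≤ 2 := by
      have := G.dist_le (Walk.cons hxc (Walk.cons hcy Walk.nil)); simpa using this
    have hpos : 0 < G.dist x y :=
      Reachable.pos_dist_of_ne (hxc.reachable.trans hcy.reachable) h0
    have hne1 : G.dist x y ≠ 1 := fun h1 => by
      have h2 := ((hstar x y).mp (dist_eq_one_iff_adj.mp h1)).2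
      exact h2.elim hx hy
    omega

set_option maxHeartbeats 2000000 in
/-- The four-point max for the star graph. -/
lemma max4_star [DecidableEq V] (G : SimpleGraph V) (c : V)
    (hstar : ∀ x y : V, G.Adj x y ↔ x ≠ y ∧ (x = c ∨ y = c))
    {w x y z : V} (hwx : w ≠ x) (hyz : y ≠ z) :
    max4 G w x y z = (if w = c ∨ x = c then 1 else 2) + (if y = c ∨ z = c then 1 else 2) := by
  simp only [max4, star_dist G c hstar]
  split_ifs <;> first | omega | (exfalso; subst_vars; simp_all)

/-- A submatrix, even with non-injective index maps, has rank at most that of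
the original matrix. -/
lemma rank_submatrix_le' {m k : Type*} [Fintype m] [Fintype k] [DecidableEq m]
    (A : Matrix m m ℚ) (f g : k → m) : (A.submatrix f g).rank ≤ A.rank := by
  have h : A.submatrix f g =
      (Matrix.of fun i j => if f i = j then (1 : ℚ) else 0) * A *
        (Matrix.of fun i j => if i = g j then (1 : ℚ) else 0) := by
    ext i j
    simp [Matrix.mul_apply, ite_mul, mul_ite, Finset.sum_ite_eq, Finset.sum_ite_eq']
  rw [h]
  exact (Matrix.rank_mul_le_left _ _).trans (Matrix.rank_mul_le_right _ _)

/-- The star tree on `n ≥ 3` vertices: a graph in which `x` and `y` are adjacent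
iff they are distinct and one of them is the central vertex `c`.  Its `Max4PC`
matrix has rank `2` over `ℚ`. -/
theorem rank_max4Matrix_star {V : Type*} [Fintype V] [DecidableEq V]
    (G : SimpleGraph V) (c : V)
    (hstar : ∀ x y : V, G.Adj x y ↔ x ≠ y ∧ (x = c ∨ y = c))
    (hn : 3 ≤ Fintype.card V) :
    (max4Matrix G).rank = 2 := by
  classical
  set I := {s : Sym2 V // ¬ s.IsDiag} with hI
  set wt : I → ℚ := fun p => if c ∈ p.1 then 1 else 2 with hwt
  have entry : ∀ p q : I, max4Matrix G p q = wt p + wt q := by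
    rintro ⟨s, hs⟩ ⟨t, ht⟩
    induction s using Sym2.ind with | _ w x =>
    induction t using Sym2.ind with | _ y z =>
    have hwx : w ≠ x := by simpa [Sym2.mk_isDiag_iff] using hs
    have hyz : y ≠ z := by simpa [Sym2.mk_isDiag_iff] using ht
    have h1 : (c ∈ s(w, x)) = (w = c ∨ x = c) := by
      apply propext; rw [Sym2.mem_iff]; tauto
    have h2 : (c ∈ s(y, z)) = (y = c ∨ z = c) := by
      apply propext; rw [Sym2.mem_iff]; tauto
    simp only [max4Matrix, max4Sym2, Sym2.lift₂_mk, hwt, h1, h2]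
    rw [max4_star G c hstar hwx hyz]
    push_cast
    rfl
  -- upper bound
  have hup : (max4Matrix G).rank ≤ 2 := by
    set B : Matrix I (Fin 2) ℚ := fun p i => if i = 0 then wt p else 1 with hB
    set C : Matrix (Fin 2) I ℚ := fun i q => if i = 0 then 1 else wt q with hC
    have hA : max4Matrix G = B * C := by
      ext p q
      rw [entry p q]
      rw [Matrix.mul_apply, Fin.sum_univ_two]
      simp [hB, hC]
    rw [hA]
    refine (Matrix.rank_mul_le_left B C).trans ?_
    simpa using B.rank_le_card_width
  -- lower bound
  have h2c : 1 < (Finset.univ.erase c).card := by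
    rw [Finset.card_erase_of_mem (Finset.mem_univ c)]
    simp only [Finset.card_univ]
    omega
  obtain ⟨a, ha, b, hb, hab⟩ := Finset.one_lt_card.mp h2c
  rw [Finset.mem_erase] at ha hb
  have hca : c ≠ a := fun h => ha.1 h.symm
  set p0 : I := ⟨s(c, a), by simp [Sym2.mk_isDiag_iff, hca]⟩ with hp0
  set p1 : I := ⟨s(a, b), by simp [Sym2.mk_isDiag_iff, hab]⟩ with hp1
  have hw0 : wt p0 = 1 := by simp [hwt, hp0]
  have hw1 : wt p1 = 2 := by
    simp only [hwt, hp1, Sym2.mem_iff, if_neg]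
    rw [if_neg]
    rintro (h | h)
    · exact ha.1 h.symm
    · exact hb.1 h.symm
  set f : Fin 2 → I := ![p0, p1] with hf
  have hS : (max4Matrix G).submatrix f f = !![2, 3; 3, 4] := by
    ext i j
    fin_cases i <;> fin_cases j <;>
      simp [Matrix.submatrix_apply, hf, entry, hw0, hw1] <;> norm_num
  have hdet : ((max4Matrix G).submatrix f f).det ≠ 0 := by
    rw [hS, Matrix.det_fin_two]
    norm_num
  have hrankS : ((max4Matrix G).submatrix f f).rank = 2 := by
    have := Matrix.rank_of_isUnit ((max4Matrix G).submatrix f f)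
      ((Matrix.isUnit_iff_isUnit_det _).mpr (isUnit_iff_ne_zero.mpr hdet))
    simpa using this
  have hlow : 2 ≤ (max4Matrix G).rank := by
    rw [← hrankS]
    exact rank_submatrix_le' (max4Matrix G) f f
  omega
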